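/- arXiv:1401.1267 — 5 statements merged into one kernel-verified Lean document; each statement's English description precedes it below -/
import Mathlib

section
/- The moment generating function of the hyperbolic-secant distribution is sec(t): for every real t with |t| < π/2, ∫_{-∞}^{∞} e^{ty}/(e^{πy/2} + e^{-πy/2}) dy = 1/cos(t). -/
open Real MeasureTheory Set

lemma beta_val {s : ℝ} (hs0 : 0 < s) (hs1 : s < 1) :
    Complex.betaIntegral s (1 - s) = ((π / Real.sin (π * s) : ℝ) : ℂ) := by
  have h1 : Complex.Gamma s * Complex.Gamma (1 - s)
      = Complex.Gamma ((s : ℂ) + (1 - s)) * Complex.betaIntegral s (1 - s) :=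
    Complex.Gamma_mul_Gamma_eq_betaIntegral (by simpa using hs0)
      (by simp only [Complex.sub_re, Complex.one_re, Complex.ofReal_re]; linarith)
  rw [Complex.Gamma_mul_Gamma_one_sub] at h1
  have h2 : (s : ℂ) + (1 - s) = 1 := by ring
  rw [h2, Complex.Gamma_one, one_mul] at h1
  rw [← h1]
  push_cast
  rfl

lemma beta_real {s : ℝ} (hs0 : 0 < s) (hs1 : s < 1) :
    ∫ x in Ioo (0:ℝ) 1, x ^ (s - 1) * (1 - x) ^ (-s) = π / Real.sin (π * s) := by
  have hb := beta_val hs0 hs1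
  rw [Complex.betaIntegral] at hb
  rw [intervalIntegral.integral_of_le (by norm_num : (0:ℝ) ≤ 1)] at hb
  rw [← MeasureTheory.integral_Ioc_eq_integral_Ioo]
  have hcongr : ∀ x ∈ Ioc (0:ℝ) 1,
      (x : ℂ) ^ ((s : ℂ) - 1) * (1 - (x : ℂ)) ^ ((1 - (s : ℂ)) - 1)
        = ((x ^ (s - 1) * (1 - x) ^ (-s) : ℝ) : ℂ) := by
    intro x hx
    have hx0 : (0:ℝ) ≤ x := hx.1.le
    have hx1 : (0:ℝ) ≤ 1 - x := by linarith [hx.2]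
    rw [Complex.ofReal_mul, Complex.ofReal_cpow hx0, Complex.ofReal_cpow hx1]
    push_cast
    ring_nf
  rw [MeasureTheory.setIntegral_congr_fun measurableSet_Ioc hcongr] at hb
  have h2 := integral_ofReal (𝕜 := ℂ) (f := fun x : ℝ => x ^ (s - 1) * (1 - x) ^ (-s))
    (μ := volume.restrict (Ioc (0:ℝ) 1))
  have h3 : ((π / Real.sin (π * s) : ℝ) : ℂ) = ((∫ x in Ioc (0:ℝ) 1, x ^ (s - 1) * (1 - x) ^ (-s) : ℝ) : ℂ) :=
    hb.symm.trans h2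
  exact (Complex.ofReal_injective h3).symm

lemma hs_cov (t s : ℝ) (hπs : π * s = t + π / 2) (hs0 : 0 < s) (hs1 : s < 1) :
    ∫ x in Ioo (0:ℝ) 1, x ^ (s - 1) * (1 - x) ^ (-s)
      = π * ∫ y : ℝ, Real.exp (t * y) / (Real.exp (π * y / 2) + Real.exp (-(π * y / 2))) := by
  have hπ : (0:ℝ) < π := pi_pos
  set f : ℝ → ℝ := fun y => Real.exp (π * y) / (1 + Real.exp (π * y)) with hf
  set f' : ℝ → ℝ := fun y => π * Real.exp (π * y) / (1 + Real.exp (π * y)) ^ 2 with hf'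
  have hEpos : ∀ y : ℝ, 0 < Real.exp (π * y) := fun y => Real.exp_pos _
  have hDpos : ∀ y : ℝ, 0 < 1 + Real.exp (π * y) := fun y => by positivity
  have hderiv : ∀ y ∈ (univ : Set ℝ), HasDerivWithinAt f (f' y) univ y := by
    intro y _
    refine HasDerivAt.hasDerivWithinAt ?_
    have hE : HasDerivAt (fun y : ℝ => Real.exp (π * y)) (π * Real.exp (π * y)) y := by
      simpa [mul_comm] using ((hasDerivAt_id y).const_mul π).exp
    have h1 : HasDerivAt (fun y : ℝ => 1 + Real.exp (π * y)) (π * Real.exp (π * y)) y := by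
      exact hE.const_add 1
    have := hE.div h1 (hDpos y).ne'
    refine this.congr_deriv ?_
    simp only [hf']
    field_simp
    ring
  have hinj : InjOn f univ := by
    intro a _ b _ hab
    simp only [hf] at hab
    rw [div_eq_div_iff (hDpos a).ne' (hDpos b).ne'] at hab
    have : Real.exp (π * a) = Real.exp (π * b) := by ring_nf at hab ⊢; linarith
    have := Real.exp_injective this
    exact mul_left_cancel₀ hπ.ne' this
  have himg : f '' univ = Ioo (0:ℝ) 1 := by
    ext x
    simp only [image_univ, mem_range, mem_Ioo]
    constructor
    · rintro ⟨y, rfl⟩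
      constructor
      · exact div_pos (hEpos y) (hDpos y)
      · rw [div_lt_one (hDpos y)]; linarith [hEpos y]
    · rintro ⟨hx0, hx1⟩
      refine ⟨Real.log (x / (1 - x)) / π, ?_⟩
      have h1x : 0 < 1 - x := by linarith
      have : Real.exp (π * (Real.log (x / (1 - x)) / π)) = x / (1 - x) := by
        rw [mul_div_cancel₀ _ hπ.ne', Real.exp_log (div_pos hx0 h1x)]
      simp only [hf, this]
      have h2 : 1 + x / (1 - x) = 1 / (1 - x) := by field_simp; ring
      rw [h2]
      field_simp
  have key := integral_image_eq_integral_abs_deriv_smul MeasurableSet.univ hderiv hinj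
    (fun x => x ^ (s - 1) * (1 - x) ^ (-s))
  rw [himg, setIntegral_univ] at key
  rw [key, ← integral_const_mul]
  congr 1
  ext y
  have hE := hEpos y
  have hD := hDpos y
  have h1f : 1 - f y = 1 / (1 + Real.exp (π * y)) := by
    simp only [hf]; field_simp; ring
  have hfy : f y ^ (s - 1) = Real.exp (π * y) ^ (s - 1) / (1 + Real.exp (π * y)) ^ (s - 1) := by
    simp only [hf]; rw [Real.div_rpow hE.le hD.le]
  have h2 : (1 - f y) ^ (-s) = (1 + Real.exp (π * y)) ^ s := by
    rw [h1f, one_div, Real.inv_rpow hD.le, ← Real.rpow_neg hD.le, neg_neg]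
  have hpow : (1 + Real.exp (π * y)) ^ s
      = (1 + Real.exp (π * y)) ^ (s - 1) * (1 + Real.exp (π * y)) := by
    rw [show s = s - 1 + 1 by ring, Real.rpow_add_one hD.ne']
    ring_nf
  have hE1 : Real.exp (π * y) ^ (s - 1) = Real.exp (t * y) * Real.exp (-(π * y / 2)) := by
    rw [← Real.exp_mul, ← Real.exp_add]
    congr 1
    linear_combination y * hπs
  have hden : (Real.exp (π * y / 2) + Real.exp (-(π * y / 2))) * Real.exp (π * y / 2)
      = 1 + Real.exp (π * y) := by
    rw [add_mul, ← Real.exp_add, ← Real.exp_add]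
    rw [show π * y / 2 + π * y / 2 = π * y by ring, show -(π * y / 2) + π * y / 2 = 0 by ring,
      Real.exp_zero]
    ring
  have hfpos : 0 < f' y := by simp only [hf']; positivity
  have hppos : 0 < (1 + Real.exp (π * y)) ^ (s - 1) := Real.rpow_pos_of_pos hD _
  have hq : 0 < Real.exp (π * y / 2) + Real.exp (-(π * y / 2)) := by positivity
  rw [smul_eq_mul, abs_of_pos hfpos, hfy, h2, hpow, hE1]
  simp only [hf']
  field_simp
  have hBC : rexp (π * y * (-1/2)) * rexp (π * y * (1/2)) = 1 := by
    rw [← Real.exp_add, show π * y * (-1/2) + π * y * (1/2) = 0 by ring, Real.exp_zero]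
  have hAB : rexp (π * y) * rexp (π * y * (-1/2)) ^ 2 = 1 := by
    rw [sq, ← Real.exp_add, ← Real.exp_add,
      show π * y + (π * y * (-1/2) + π * y * (-1/2)) = 0 by ring, Real.exp_zero]
  have hBA : rexp (-(π * y / 2)) * rexp (π * y / 2) = 1 := by
    rw [← Real.exp_add, show -(π * y / 2) + π * y / 2 = 0 by ring, Real.exp_zero]
  have hEB2 : rexp (π * y) * rexp (-(π * y / 2)) ^ 2 = 1 := by
    rw [sq, ← Real.exp_add, ← Real.exp_add,
      show π * y + (-(π * y / 2) + -(π * y / 2)) = 0 by ring, Real.exp_zero]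
  linear_combination rexp (π * y) * hBA + hEB2


/-- The moment generating function of the hyperbolic-secant distribution is `sec t`. -/
theorem hs_mgf (t : ℝ) (ht : |t| < π / 2) :
    ∫ y : ℝ, Real.exp (t * y) / (Real.exp (π * y / 2) + Real.exp (-(π * y / 2)))
      = 1 / Real.cos t := by
  obtain ⟨ht1, ht2⟩ := abs_lt.mp ht
  have hπ : (0:ℝ) < π := pi_pos
  set s : ℝ := t / π + 1 / 2 with hsdef
  have hπs : π * s = t + π / 2 := by rw [hsdef]; field_simp
  have hs0 : 0 < s := by
    have : -(1/2) < t / π := by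
      rw [neg_lt, ← neg_div, div_lt_div_iff₀ hπ (by norm_num : (0:ℝ) < 2)]
      linarith
    simp only [hsdef]; linarith
  have hs1 : s < 1 := by
    have : t / π < 1/2 := by
      rw [div_lt_div_iff₀ hπ (by norm_num : (0:ℝ) < 2)]
      linarith
    simp only [hsdef]; linarith
  have hcos : 0 < Real.cos t := Real.cos_pos_of_mem_Ioo ⟨ht1, ht2⟩
  have hsin : Real.sin (π * s) = Real.cos t := by
    rw [hπs, Real.sin_add_pi_div_two]
  have h1 := beta_real hs0 hs1
  have h2 := hs_cov t s hπs hs0 hs1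
  rw [h2, hsin] at h1
  exact mul_left_cancel₀ hπ.ne' (h1.trans (mul_one_div π (Real.cos t)).symm)
end

section
/- If C has the standard Cauchy distribution, then (2/π)·log|C| has the hyperbolic-secant distribution: the pushforward of the measure on ℝ with Lebesgue density x ↦ 1/(π(1+x²)) under the map x ↦ (2/π)·log|x| equals the measure on ℝ with Lebesgue density y ↦ 1/(e^{πy/2} + e^{-πy/2}). -/
open Real MeasureTheory Set Filter Topology

-- integrability of exp (π y / 2) on a left ray
lemma exp_half_pi_integrableOn_Iic (a : ℝ) :
    IntegrableOn (fun y : ℝ => Real.exp (π * y / 2)) (Iic a) := by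
  refine integrableOn_Iic_of_intervalIntegral_norm_bounded
    ((2 / π) * Real.exp (π * a / 2)) a
    (fun y : ℝ => ((continuous_exp.comp (by continuity)).integrableOn_Ioc)) tendsto_id ?_
  filter_upwards [eventually_le_atBot a] with y (hy : y ≤ a)
  have hle : ∀ x : ℝ, ‖Real.exp (π * x / 2)‖ = Real.exp (π * x / 2) := fun x =>
    norm_of_nonneg (exp_pos _).le
  simp_rw [hle]
  have hπ : (0:ℝ) < π := pi_pos
  have hderiv : ∀ x ∈ uIcc y a, HasDerivAt (fun t : ℝ => (2/π) * Real.exp (π * t / 2))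
      (Real.exp (π * x / 2)) x := by
    intro x hx
    have h1 : HasDerivAt (fun t : ℝ => π * t / 2) (π / 2) x := by
      simpa using ((hasDerivAt_id x).const_mul π).div_const 2
    have := (h1.exp.const_mul (2/π))
    refine this.congr_deriv ?_
    field_simp
  rw [show (id y : ℝ) = y from rfl, intervalIntegral.integral_eq_sub_of_hasDerivAt hderiv
    ((continuous_exp.comp (by continuity)).intervalIntegrable y a)]
  have h2 : (0:ℝ) < 2/π := by positivity
  have : (2/π) * Real.exp (π * y / 2) > 0 := by positivity
  nlinarith [exp_pos (π * y / 2)]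

lemma sech_integrableOn_Iic (a : ℝ) :
    IntegrableOn (fun y : ℝ => 1 / (Real.exp (π * y / 2) + Real.exp (-(π * y / 2)))) (Iic a) := by
  refine (exp_half_pi_integrableOn_Iic a).mono' ?_ ?_
  · exact (Continuous.aestronglyMeasurable (by
      refine continuous_const.div (continuous_exp.comp (by continuity) |>.add
        (continuous_exp.comp (by continuity))) fun x => by positivity))
  · filter_upwards with y
    have h1 : (0:ℝ) < Real.exp (π * y / 2) + Real.exp (-(π * y / 2)) := by positivity
    rw [norm_of_nonneg (by positivity)]
    rw [div_le_iff₀ h1, mul_add, ← Real.exp_add, ← Real.exp_add, add_neg_cancel, Real.exp_zero]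
    nlinarith [Real.exp_pos (π * y / 2 + π * y / 2)]

lemma sech_integral_Iic (a : ℝ) :
    ∫ y in Iic a, 1 / (Real.exp (π * y / 2) + Real.exp (-(π * y / 2)))
      = (2 / π) * Real.arctan (Real.exp (π * a / 2)) := by
  have hπ : (0:ℝ) < π := pi_pos
  have hderiv : ∀ x ∈ Iic a,
      HasDerivAt (fun y : ℝ => (2 / π) * Real.arctan (Real.exp (π * y / 2)))
        (1 / (Real.exp (π * x / 2) + Real.exp (-(π * x / 2)))) x := by
    intro x _
    have h1 : HasDerivAt (fun t : ℝ => π * t / 2) (π / 2) x := by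
      simpa using ((hasDerivAt_id x).const_mul π).div_const 2
    have h4 := (h1.exp.arctan).const_mul (2 / π)
    refine h4.congr_deriv ?_
    have hE : (0:ℝ) < Real.exp (π * x / 2) := exp_pos _
    rw [Real.exp_neg]
    field_simp
    ring
  have htend : Tendsto (fun y : ℝ => (2 / π) * Real.arctan (Real.exp (π * y / 2)))
      atBot (𝓝 0) := by
    have h1 : Tendsto (fun y : ℝ => π * y / 2) atBot atBot := by
      have := tendsto_const_mul_atBot_of_pos (r := π / 2) (by positivity)
        |>.mpr (tendsto_id (α := ℝ))
      exact this.congr (fun y => by simp [id]; ring)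
    have h2 : Tendsto (fun y : ℝ => Real.exp (π * y / 2)) atBot (𝓝 0) :=
      Real.tendsto_exp_atBot.comp h1
    have h3 : Tendsto (fun y : ℝ => Real.arctan (Real.exp (π * y / 2))) atBot (𝓝 0) := by
      have := (Real.continuous_arctan.tendsto 0).comp h2
      simpa [Function.comp_def] using this
    simpa using h3.const_mul (2 / π)
  have := integral_Iic_of_hasDerivAt_of_tendsto' hderiv (sech_integrableOn_Iic a) htend
  rw [this, sub_zero]

lemma cauchy_cont : Continuous fun x : ℝ => 1 / (π * (1 + x ^ 2)) :=
  continuous_const.div (continuous_const.mul (by continuity)) fun x => by positivity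

lemma cauchy_integral_Icc (t : ℝ) (ht : 0 < t) :
    ∫ x in Icc (-t) t, 1 / (π * (1 + x ^ 2)) = (2 / π) * Real.arctan t := by
  have hπ : (0:ℝ) < π := pi_pos
  rw [MeasureTheory.integral_Icc_eq_integral_Ioc,
    ← intervalIntegral.integral_of_le (by linarith : -t ≤ t)]
  have : ∀ x : ℝ, 1 / (π * (1 + x ^ 2)) = (1 / π) * (1 + x ^ 2)⁻¹ := fun x => by
    rw [one_div, mul_inv, one_div]
  simp_rw [this]
  rw [intervalIntegral.integral_const_mul, integral_inv_one_add_sq, Real.arctan_neg]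
  ring

/-- The pushforward of the standard Cauchy distribution under `x ↦ (2/π) log |x|`
is the hyperbolic-secant distribution. -/
theorem cauchy_log_abs_hs :
    Measure.map (fun x : ℝ => (2 / π) * Real.log |x|)
        (volume.withDensity fun x : ℝ => ENNReal.ofReal (1 / (π * (1 + x ^ 2))))
      = volume.withDensity
          fun y : ℝ => ENNReal.ofReal (1 / (Real.exp (π * y / 2) + Real.exp (-(π * y / 2)))) := by
  have hπ : (0:ℝ) < π := pi_pos
  set μ : Measure ℝ := volume.withDensity fun x : ℝ => ENNReal.ofReal (1 / (π * (1 + x ^ 2)))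
    with hμ
  have hmeas : Measurable fun x : ℝ => (2 / π) * Real.log |x| :=
    (Real.measurable_log.comp measurable_abs).const_mul _
  have hcauchy_int : Integrable (fun x : ℝ => 1 / (π * (1 + x ^ 2))) := by
    have h := integrable_inv_one_add_sq.const_mul (1 / π)
    refine h.congr (Filter.Eventually.of_forall fun x => ?_)
    simp only [one_div, mul_inv]
  have hfin : IsFiniteMeasure μ := by
    constructor
    rw [hμ, withDensity_apply _ MeasurableSet.univ, Measure.restrict_univ]
    exact hcauchy_int.lintegral_lt_top
  have hfinmap : IsFiniteMeasure (Measure.map (fun x : ℝ => (2 / π) * Real.log |x|) μ) := by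
    constructor
    rw [Measure.map_apply hmeas MeasurableSet.univ]
    exact (measure_mono (Set.subset_univ _)).trans_lt (measure_lt_top μ _)
  refine Measure.ext_of_Iic _ _ (fun a => ?_)
  set t := Real.exp (π * a / 2) with ht
  have htpos : 0 < t := exp_pos _
  rw [Measure.map_apply hmeas measurableSet_Iic]
  have hset : μ ((fun x : ℝ => (2 / π) * Real.log |x|) ⁻¹' Iic a) = μ (Icc (-t) t) := by
    apply measure_congr
    have hv : ∀ᵐ x ∂(volume : Measure ℝ), x ≠ (0:ℝ) := by
      simp [ae_iff]
    have h0 : ∀ᵐ x ∂μ, x ≠ (0:ℝ) :=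
      hv.filter_mono (withDensity_absolutelyContinuous volume _).ae_le
    rw [Filter.eventuallyEq_set]
    filter_upwards [h0] with x hx
    simp only [mem_preimage, mem_Iic, mem_Icc]
    have hxabs : 0 < |x| := abs_pos.mpr hx
    rw [← abs_le, div_mul_eq_mul_div, div_le_iff₀ hπ]
    constructor
    · intro h
      rw [ht, ← Real.log_le_iff_le_exp hxabs]
      linarith [mul_comm a π]
    · intro h
      rw [ht, ← Real.log_le_iff_le_exp hxabs] at h
      linarith [mul_comm a π]
  rw [hset, withDensity_apply _ measurableSet_Icc, withDensity_apply _ measurableSet_Iic,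
    ← ofReal_integral_eq_lintegral_ofReal (cauchy_cont.integrableOn_Icc)
      (Filter.Eventually.of_forall fun x => by positivity),
    ← ofReal_integral_eq_lintegral_ofReal (sech_integrableOn_Iic a)
      (Filter.Eventually.of_forall fun x => by positivity),
    cauchy_integral_Icc t htpos, sech_integral_Iic a]
end

section
/- The ratio of two independent standard normal random variables is standard Cauchy: the pushforward of the product measure N(0,1) ⊗ N(0,1) on ℝ² under the map (z₁, z₂) ↦ z₁/z₂ equals the measure on ℝ with Lebesgue density x ↦ 1/(π(1+x²)). -/
open Real MeasureTheory ProbabilityTheory Set Filter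

lemma integral_id_mul_exp_Ioi {a : ℝ} (ha : 0 < a) :
    ∫ y in Set.Ioi (0:ℝ), y * rexp (-a * y ^ 2) = (2 * a)⁻¹ := by
  have A : ∀ x : ℝ, HasDerivAt (fun x : ℝ => -(2 * a)⁻¹ * rexp (-a * x ^ 2))
      (x * rexp (-a * x ^ 2)) x := by
    intro x
    convert ((hasDerivAt_pow 2 x).const_mul (-a)).exp.const_mul (-(2 * a)⁻¹) using 1
    any_goals rfl
    field_simp
    ring
  have B : Tendsto (fun y : ℝ ↦ -(2 * a)⁻¹ * rexp (-a * y ^ 2)) atTop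
      (nhds (-(2 * a)⁻¹ * 0)) := by
    refine Tendsto.const_mul _ ?_
    have h2 : Tendsto (fun y : ℝ => -a * y ^ 2) atTop atBot :=
      (tendsto_pow_atTop two_ne_zero).const_mul_atTop_of_neg (neg_lt_zero.2 ha)
    exact Real.tendsto_exp_atBot.comp h2
  have := integral_Ioi_of_hasDerivAt_of_tendsto' (a := 0) (fun x _ => A x)
    (integrable_mul_exp_neg_mul_sq ha).integrableOn B
  simpa using this

lemma integrable_abs_mul_exp {a : ℝ} (ha : 0 < a) :
    Integrable (fun y : ℝ => |y| * rexp (-a * y ^ 2)) := by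
  have := (integrable_mul_exp_neg_mul_sq ha).abs
  refine this.congr (ae_of_all _ fun y => ?_)
  simp [abs_mul, abs_exp]

lemma integral_abs_mul_exp {a : ℝ} (ha : 0 < a) :
    ∫ y : ℝ, |y| * rexp (-a * y ^ 2) = a⁻¹ := by
  calc ∫ y : ℝ, |y| * rexp (-a * y ^ 2)
      = ∫ y : ℝ, |y| * rexp (-a * |y| ^ 2) := by simp_rw [sq_abs]
    _ = 2 * ∫ y in Set.Ioi (0:ℝ), y * rexp (-a * y ^ 2) :=
        integral_comp_abs (f := fun t => t * rexp (-a * t ^ 2))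
    _ = a⁻¹ := by rw [integral_id_mul_exp_Ioi ha]; field_simp

lemma key_lintegral (u : ℝ) :
    ∫⁻ y : ℝ, ENNReal.ofReal (gaussianPDFReal 0 1 y * (|y| * gaussianPDFReal 0 1 (u * y)))
      = ENNReal.ofReal (1 / (π * (1 + u ^ 2))) := by
  have ha : 0 < (1 + u ^ 2) / 2 := by positivity
  have hpt : ∀ y : ℝ, gaussianPDFReal 0 1 y * (|y| * gaussianPDFReal 0 1 (u * y))
      = (2 * π)⁻¹ * (|y| * rexp (-((1 + u ^ 2) / 2) * y ^ 2)) := by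
    intro y
    simp only [gaussianPDFReal, NNReal.coe_one, mul_one, sub_zero]
    have e1 : rexp (-y ^ 2 / 2) * rexp (-(u * y) ^ 2 / 2)
        = rexp (-((1 + u ^ 2) / 2) * y ^ 2) := by
      rw [← Real.exp_add]; congr 1; ring
    have e2 : (√(2 * π))⁻¹ * (√(2 * π))⁻¹ = (2 * π)⁻¹ := by
      rw [← mul_inv]; congr 1; exact Real.mul_self_sqrt (by positivity)
    calc (√(2 * π))⁻¹ * rexp (-y ^ 2 / 2) * (|y| * ((√(2 * π))⁻¹ * rexp (-(u * y) ^ 2 / 2)))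
        = (√(2 * π))⁻¹ * (√(2 * π))⁻¹
            * (|y| * (rexp (-y ^ 2 / 2) * rexp (-(u * y) ^ 2 / 2))) := by ring
      _ = (2 * π)⁻¹ * (|y| * rexp (-((1 + u ^ 2) / 2) * y ^ 2)) := by rw [e1, e2]
  simp_rw [hpt]
  have hint : Integrable (fun y : ℝ => |y| * rexp (-((1 + u ^ 2) / 2) * y ^ 2)) :=
    integrable_abs_mul_exp ha
  have hnn : ∀ y : ℝ, 0 ≤ |y| * rexp (-((1 + u ^ 2) / 2) * y ^ 2) := fun y => by positivity
  calc ∫⁻ y : ℝ, ENNReal.ofReal ((2 * π)⁻¹ * (|y| * rexp (-((1 + u ^ 2) / 2) * y ^ 2)))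
      = ∫⁻ y : ℝ, ENNReal.ofReal ((2 * π)⁻¹) *
          ENNReal.ofReal (|y| * rexp (-((1 + u ^ 2) / 2) * y ^ 2)) := by
        simp_rw [← ENNReal.ofReal_mul (by positivity : (0:ℝ) ≤ (2 * π)⁻¹)]
    _ = ENNReal.ofReal ((2 * π)⁻¹) *
          ∫⁻ y : ℝ, ENNReal.ofReal (|y| * rexp (-((1 + u ^ 2) / 2) * y ^ 2)) :=
        lintegral_const_mul' _ _ ENNReal.ofReal_ne_top
    _ = ENNReal.ofReal ((2 * π)⁻¹) *
          ENNReal.ofReal (∫ y : ℝ, |y| * rexp (-((1 + u ^ 2) / 2) * y ^ 2)) := by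
        rw [ofReal_integral_eq_lintegral_ofReal hint (ae_of_all _ hnn)]
    _ = ENNReal.ofReal (1 / (π * (1 + u ^ 2))) := by
        rw [integral_abs_mul_exp ha, ← ENNReal.ofReal_mul (by positivity)]
        congr 1
        field_simp

/-- The ratio of two independent standard normal random variables is standard Cauchy. -/
theorem gaussian_ratio_cauchy :
    Measure.map (fun p : ℝ × ℝ => p.1 / p.2) ((gaussianReal 0 1).prod (gaussianReal 0 1))
      = volume.withDensity fun x : ℝ => ENNReal.ofReal (1 / (π * (1 + x ^ 2))) := by
  have hφm : Measurable (gaussianPDFReal 0 1) := measurable_gaussianPDFReal 0 1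
  have hG : gaussianReal 0 1 = volume.withDensity
      (fun x => ENNReal.ofReal (gaussianPDFReal 0 1 x)) := by
    rw [gaussianReal_of_var_ne_zero 0 one_ne_zero]; rfl
  have hfm : Measurable (fun p : ℝ × ℝ => p.1 / p.2) := measurable_fst.div measurable_snd
  ext s hs
  rw [Measure.map_apply hfm hs, withDensity_apply _ hs]
  set A : Set (ℝ × ℝ) := (fun p : ℝ × ℝ => p.1 / p.2) ⁻¹' s with hA
  have hAm : MeasurableSet A := hfm hs
  rw [Measure.prod_apply_symm hAm]
  -- rewrite the outer measure as lintegral against volume with density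
  rw [hG, lintegral_withDensity_eq_lintegral_mul _ (hφm.ennreal_ofReal)
    (measurable_measure_prodMk_right hAm)]
  have key : ∀ y : ℝ, y ≠ 0 →
      ENNReal.ofReal (gaussianPDFReal 0 1 y) *
        (volume.withDensity (fun x => ENNReal.ofReal (gaussianPDFReal 0 1 x)))
          ((fun x => (x, y)) ⁻¹' A)
      = ∫⁻ u in s, ENNReal.ofReal
          (gaussianPDFReal 0 1 y * (|y| * gaussianPDFReal 0 1 (u * y))) := by
    intro y hy
    have hB : (fun x => (x, y)) ⁻¹' A = (fun x => x / y) ⁻¹' s := rfl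
    have hBm : MeasurableSet ((fun x : ℝ => x / y) ⁻¹' s) :=
      (measurable_id.div_const y) hs
    rw [hB, withDensity_apply _ hBm]
    -- change of variables x = u * y
    have hmap : ∫⁻ x in (fun x : ℝ => x / y) ⁻¹' s, ENNReal.ofReal (gaussianPDFReal 0 1 x)
        = ENNReal.ofReal |y| * ∫⁻ u in s, ENNReal.ofReal (gaussianPDFReal 0 1 (u * y)) := by
      have h1 : ∫⁻ u : ℝ, ((fun x : ℝ => x / y) ⁻¹' s).indicator
            (fun x => ENNReal.ofReal (gaussianPDFReal 0 1 x)) (u * y)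
          = ENNReal.ofReal |y⁻¹| * ∫⁻ x : ℝ, ((fun x : ℝ => x / y) ⁻¹' s).indicator
            (fun x => ENNReal.ofReal (gaussianPDFReal 0 1 x)) x := by
        rw [← lintegral_map' (hφm.ennreal_ofReal.indicator hBm).aemeasurable
          (measurable_mul_const y).aemeasurable, Real.map_volume_mul_right hy]
        simp [lintegral_smul_measure]
      have h2 : ∀ u : ℝ, ((fun x : ℝ => x / y) ⁻¹' s).indicator
            (fun x => ENNReal.ofReal (gaussianPDFReal 0 1 x)) (u * y)
          = s.indicator (fun u => ENNReal.ofReal (gaussianPDFReal 0 1 (u * y))) u := by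
        intro u
        have hmem : u * y ∈ (fun x : ℝ => x / y) ⁻¹' s ↔ u ∈ s := by
          simp [Set.mem_preimage, mul_div_assoc, div_self hy]
        by_cases h : u ∈ s
        · rw [Set.indicator_of_mem (hmem.2 h), Set.indicator_of_mem h]
        · rw [Set.indicator_of_notMem (fun hh => h (hmem.1 hh)),
            Set.indicator_of_notMem h]
      simp_rw [h2] at h1
      rw [← lintegral_indicator hBm, ← lintegral_indicator hs]
      rw [h1]
      rw [← mul_assoc, ← ENNReal.ofReal_mul (abs_nonneg _), ← abs_mul,
        mul_inv_cancel₀ hy, abs_one, ENNReal.ofReal_one, one_mul]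
    rw [hmap, ← mul_assoc, ← lintegral_const_mul' _ _
      (ENNReal.mul_ne_top ENNReal.ofReal_ne_top ENNReal.ofReal_ne_top)]
    refine lintegral_congr fun u => ?_
    rw [mul_assoc, ← ENNReal.ofReal_mul (abs_nonneg y),
      ← ENNReal.ofReal_mul (gaussianPDFReal_nonneg 0 1 y)]
  have hae : ∀ᵐ y : ℝ, ENNReal.ofReal (gaussianPDFReal 0 1 y) *
        (volume.withDensity (fun x => ENNReal.ofReal (gaussianPDFReal 0 1 x)))
          ((fun x => (x, y)) ⁻¹' A)
      = ∫⁻ u in s, ENNReal.ofReal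
          (gaussianPDFReal 0 1 y * (|y| * gaussianPDFReal 0 1 (u * y))) := by
    filter_upwards [compl_mem_ae_iff.2 Real.volume_singleton] with y hy
    exact key y hy
  simp only [Pi.mul_apply]
  rw [lintegral_congr_ae hae]
  -- swap the integrals (Tonelli)
  rw [lintegral_lintegral_swap]
  · refine lintegral_congr fun u => ?_
    exact key_lintegral u
  · apply Measurable.aemeasurable
    apply Measurable.ennreal_ofReal
    exact (hφm.comp measurable_fst).mul
      ((measurable_fst.abs).mul (hφm.comp (measurable_snd.mul measurable_fst)))
end

section
/- Distribution of the z-transformed intraclass correlation coefficient for one bivariate normal pair: let Z₁, Z₂ be independent standard normal random variables on a probability space, let μ ∈ ℝ, σ > 0, and ρ ∈ (−1, 1), and define X₁ = μ + σZ₁ and X₂ = μ + σ(ρZ₁ + √(1−ρ²)Z₂), so that (X₁, X₂) is bivariate normal with common mean μ, common variance σ², and correlation ρ. Let R = 2(X₁−μ)(X₂−μ)/((X₁−μ)² + (X₂−μ)²). Then the law of V = artanh(R) is the probability measure on ℝ with Lebesgue density v ↦ (1/π)·sech(v − artanh(ρ)) = 2/(π(e^{v − artanh ρ} + e^{-(v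 − artanh ρ)})). -/
open Real MeasureTheory ProbabilityTheory Set
open scoped ENNReal

/-- Fisher's z-transformation `artanh r = (1/2) log((1+r)/(1−r))`. -/
noncomputable def artanh (r : ℝ) : ℝ := (1 / 2) * Real.log ((1 + r) / (1 - r))

section AuxLemmas

/-- 1D lintegral change of variables. -/
lemma lintegral_image_deriv {s : Set ℝ} {f f' : ℝ → ℝ}
    (hs : MeasurableSet s) (hf' : ∀ x ∈ s, HasDerivWithinAt f (f' x) s x)
    (hf : Set.InjOn f s) (g : ℝ → ℝ≥0∞) :
    ∫⁻ x in f '' s, g x = ∫⁻ x in s, ENNReal.ofReal |f' x| * g (f x) := by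
  simpa only [ContinuousLinearMap.det_toSpanSingleton] using
    lintegral_image_eq_lintegral_abs_det_fderiv_mul volume hs
      (fun x hx => (hf' x hx).hasFDerivWithinAt) hf g

lemma lintegral_exp_neg_mul_Ioi {k : ℝ} (hk : 0 < k) :
    ∫⁻ x in Set.Ioi (0:ℝ), ENNReal.ofReal (Real.exp (-(k * x))) = ENNReal.ofReal k⁻¹ := by
  have himg : (fun x : ℝ => k * x) '' Set.Ioi 0 = Set.Ioi 0 := by
    ext y
    simp only [Set.mem_image, Set.mem_Ioi]
    constructor
    · rintro ⟨x, hx, rfl⟩; positivity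
    · intro hy; exact ⟨y / k, by positivity, by field_simp⟩
  have hsub := lintegral_image_deriv (s := Set.Ioi 0) (f := fun x : ℝ => k * x)
    (f' := fun _ => k) measurableSet_Ioi
    (fun x _ => ((hasDerivAt_id x).const_mul k).hasDerivWithinAt.congr_deriv (by ring))
    (fun a _ b _ h => by
      have := mul_left_cancel₀ hk.ne' h
      exact this)
    (fun y => ENNReal.ofReal (Real.exp (-y)))
  rw [himg] at hsub
  have hL : ∫⁻ x in Set.Ioi (0:ℝ), ENNReal.ofReal (Real.exp (-x)) = 1 := by
    rw [← ofReal_integral_eq_lintegral_ofReal]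
    · rw [integral_exp_neg_Ioi_zero]; simp
    · simpa [IntegrableOn] using exp_neg_integrableOn_Ioi 0 one_pos
    · exact Filter.Eventually.of_forall fun x => (Real.exp_pos _).le
  rw [hL] at hsub
  have hk' : ENNReal.ofReal |k| ≠ ⊤ := ENNReal.ofReal_ne_top
  rw [lintegral_const_mul' _ _ hk'] at hsub
  have hkne : ENNReal.ofReal |k| ≠ 0 := by
    simp [abs_of_pos hk, hk, ENNReal.ofReal_eq_zero, not_le, hk]
  have := hsub.symm
  rw [abs_of_pos hk] at this hkne hk'
  calc ∫⁻ x in Set.Ioi (0:ℝ), ENNReal.ofReal (Real.exp (-(k * x)))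
      = (ENNReal.ofReal k)⁻¹ * (ENNReal.ofReal k *
          ∫⁻ x in Set.Ioi (0:ℝ), ENNReal.ofReal (Real.exp (-(k * x)))) := by
        rw [← mul_assoc, ENNReal.inv_mul_cancel hkne hk', one_mul]
    _ = (ENNReal.ofReal k)⁻¹ * 1 := by rw [← this]
    _ = ENNReal.ofReal k⁻¹ := by rw [mul_one, ENNReal.ofReal_inv_of_pos hk]

lemma lintegral_Iio_neg (g : ℝ → ℝ≥0∞) :
    ∫⁻ u in Set.Iio (0:ℝ), g u = ∫⁻ u in Set.Ioi (0:ℝ), g (-u) := by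
  have himg : (fun u : ℝ => -u) '' Set.Ioi 0 = Set.Iio 0 := by
    ext y
    simp only [Set.mem_image, Set.mem_Ioi, Set.mem_Iio]
    constructor
    · rintro ⟨x, hx, rfl⟩; linarith
    · intro hy; exact ⟨-y, by linarith, by ring⟩
  rw [← himg, lintegral_image_deriv measurableSet_Ioi
    (fun x _ => (hasDerivAt_neg x).hasDerivWithinAt)
    (fun a _ b _ h => by simpa using h) g]
  simp

lemma lintegral_split (g : ℝ → ℝ≥0∞) :
    ∫⁻ u : ℝ, g u = (∫⁻ u in Set.Iio (0:ℝ), g u) + ∫⁻ u in Set.Ioi (0:ℝ), g u := by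
  have h0 : (volume : Measure ℝ) {(0:ℝ)} = 0 := measure_singleton 0
  have hcompl : ({(0:ℝ)} : Set ℝ)ᶜ = Set.Iio 0 ∪ Set.Ioi 0 := by
    ext x; simp [eq_comm, lt_or_lt_iff_ne, ne_comm]
  calc ∫⁻ u : ℝ, g u
      = (∫⁻ u in ({(0:ℝ)} : Set ℝ), g u) + ∫⁻ u in ({(0:ℝ)} : Set ℝ)ᶜ, g u :=
        (lintegral_add_compl g (measurableSet_singleton 0)).symm
    _ = ∫⁻ u in Set.Iio 0 ∪ Set.Ioi 0, g u := by
        rw [setLIntegral_measure_zero _ _ h0, zero_add, hcompl]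
    _ = (∫⁻ u in Set.Iio (0:ℝ), g u) + ∫⁻ u in Set.Ioi (0:ℝ), g u := by
        rw [lintegral_union measurableSet_Ioi (((Set.Iic_disjoint_Ioi le_rfl).mono_left Set.Iio_subset_Iic_self : Disjoint (Set.Iio (0:ℝ)) (Set.Ioi 0)))]

lemma lintegral_abs_mul_exp_neg_mul_sq {k : ℝ} (hk : 0 < k) :
    ∫⁻ x : ℝ, ENNReal.ofReal (|x| * Real.exp (-(k * x ^ 2))) = ENNReal.ofReal k⁻¹ := by
  have himg : (fun x : ℝ => x ^ 2) '' Set.Ioi 0 = Set.Ioi 0 := by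
    ext y
    simp only [Set.mem_image, Set.mem_Ioi]
    constructor
    · rintro ⟨x, hx, rfl⟩; positivity
    · intro hy; exact ⟨Real.sqrt y, Real.sqrt_pos.mpr hy, Real.sq_sqrt hy.le⟩
  have hIoi : (∫⁻ x in Set.Ioi (0:ℝ), ENNReal.ofReal (|x| * Real.exp (-(k * x ^ 2))))
      = ENNReal.ofReal (2:ℝ)⁻¹ * ENNReal.ofReal k⁻¹ := by
    have hinj : Set.InjOn (fun x : ℝ => x ^ 2) (Set.Ioi 0) := by
      intro a ha b hb h
      simp only [Set.mem_Ioi] at ha hb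
      have h2 : (a - b) * (a + b) = 0 := by simp only at h; nlinarith
      rcases mul_eq_zero.mp h2 with h3 | h3
      · linarith
      · linarith
    have hsub := lintegral_image_deriv (s := Set.Ioi 0) (f := fun x : ℝ => x ^ 2)
      (f' := fun x => 2 * x) measurableSet_Ioi
      (fun x _ => by simpa using (hasDerivAt_pow 2 x).hasDerivWithinAt)
      hinj (fun y => ENNReal.ofReal ((2:ℝ)⁻¹ * Real.exp (-(k * y))))
    rw [himg] at hsub
    have hR : ∀ x ∈ Set.Ioi (0:ℝ), ENNReal.ofReal |2 * x| *
        ENNReal.ofReal ((2:ℝ)⁻¹ * Real.exp (-(k * x ^ 2)))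
        = ENNReal.ofReal (|x| * Real.exp (-(k * x ^ 2))) := by
      intro x hx
      rw [← ENNReal.ofReal_mul (abs_nonneg _)]
      congr 1
      rw [abs_mul]
      norm_num
      ring
    calc (∫⁻ x in Set.Ioi (0:ℝ), ENNReal.ofReal (|x| * Real.exp (-(k * x ^ 2))))
        = ∫⁻ x in Set.Ioi (0:ℝ), ENNReal.ofReal |2 * x| *
            ENNReal.ofReal ((2:ℝ)⁻¹ * Real.exp (-(k * x ^ 2))) := by
          refine setLIntegral_congr_fun measurableSet_Ioi ?_
          exact fun x hx => (hR x hx).symm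
      _ = ∫⁻ y in Set.Ioi (0:ℝ), ENNReal.ofReal ((2:ℝ)⁻¹ * Real.exp (-(k * y))) := hsub.symm
      _ = ENNReal.ofReal (2:ℝ)⁻¹ * ENNReal.ofReal k⁻¹ := by
          simp_rw [ENNReal.ofReal_mul (by norm_num : (0:ℝ) ≤ (2:ℝ)⁻¹)]
          rw [lintegral_const_mul' _ _ ENNReal.ofReal_ne_top,
            lintegral_exp_neg_mul_Ioi hk]
  rw [lintegral_split, lintegral_Iio_neg]
  have : ∀ u : ℝ, ENNReal.ofReal (|-u| * Real.exp (-(k * (-u) ^ 2)))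
      = ENNReal.ofReal (|u| * Real.exp (-(k * u ^ 2))) := by
    intro u; rw [abs_neg, neg_pow]; norm_num
  simp_rw [this]
  rw [hIoi, ← two_mul, ← mul_assoc,
    show (2:ℝ≥0∞) = ENNReal.ofReal (2:ℝ) by norm_num,
    ← ENNReal.ofReal_mul (by norm_num : (0:ℝ) ≤ 2)]
  norm_num

lemma lintegral_Ioi_eq_exp {c : ℝ} (hc : 0 < c) (g : ℝ → ℝ≥0∞) :
    ∫⁻ u in Set.Ioi (0:ℝ), g u
      = ∫⁻ v : ℝ, ENNReal.ofReal (c * Real.exp v) * g (c * Real.exp v) := by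
  have himg : (fun v : ℝ => c * Real.exp v) '' Set.univ = Set.Ioi 0 := by
    ext y
    simp only [Set.image_univ, Set.mem_range, Set.mem_Ioi]
    constructor
    · rintro ⟨v, rfl⟩; positivity
    · intro hy
      exact ⟨Real.log (y / c), by rw [Real.exp_log (by positivity)]; field_simp⟩
  have hinj : Set.InjOn (fun v : ℝ => c * Real.exp v) Set.univ := by
    intro a _ b _ h
    simp only at h
    exact Real.exp_injective (mul_left_cancel₀ hc.ne' h)
  have hsub := lintegral_image_deriv (s := Set.univ) (f := fun v : ℝ => c * Real.exp v)
    (f' := fun v => c * Real.exp v) MeasurableSet.univ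
    (fun x _ => ((Real.hasDerivAt_exp x).const_mul c).hasDerivWithinAt) hinj g
  rw [himg] at hsub
  rw [hsub, Measure.restrict_univ]
  refine lintegral_congr fun v => ?_
  rw [abs_of_pos (by positivity)]

lemma artanh_ratio {a b : ℝ} (h1 : a + b ≠ 0) (h2 : a - b ≠ 0) :
    _root_.artanh (2 * a * b / (a ^ 2 + b ^ 2)) = Real.log |a + b| - Real.log |a - b| := by
  have hab : a ^ 2 + b ^ 2 ≠ 0 := by
    intro h
    have ha : a = 0 := by nlinarith [sq_nonneg a, sq_nonneg b]
    have hb : b = 0 := by nlinarith [sq_nonneg a, sq_nonneg b]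
    exact h1 (by rw [ha, hb, add_zero])
  have e1 : 1 + 2 * a * b / (a ^ 2 + b ^ 2) = (a + b) ^ 2 / (a ^ 2 + b ^ 2) := by
    field_simp; ring
  have e2 : 1 - 2 * a * b / (a ^ 2 + b ^ 2) = (a - b) ^ 2 / (a ^ 2 + b ^ 2) := by
    field_simp; ring
  have e3 : (a + b) ^ 2 / (a ^ 2 + b ^ 2) / ((a - b) ^ 2 / (a ^ 2 + b ^ 2))
      = (a + b) ^ 2 / (a - b) ^ 2 := by
    field_simp
  unfold _root_.artanh
  rw [e1, e2, e3, Real.log_div (pow_ne_zero _ h1) (pow_ne_zero _ h2),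
    ← sq_abs (a + b), ← sq_abs (a - b), Real.log_pow, Real.log_pow]
  push_cast
  ring

lemma gauss_line (c₁ c₂ : ℝ) (hc₂ : c₂ ≠ 0) :
    ((gaussianReal 0 1).prod (gaussianReal 0 1)) {p : ℝ × ℝ | c₁ * p.1 + c₂ * p.2 = 0} = 0 := by
  have hmeas : MeasurableSet {p : ℝ × ℝ | c₁ * p.1 + c₂ * p.2 = 0} := by
    have : Measurable fun p : ℝ × ℝ => c₁ * p.1 + c₂ * p.2 := by fun_prop
    exact this (measurableSet_singleton 0)
  rw [Measure.measure_prod_null hmeas]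
  refine Filter.Eventually.of_forall fun x => ?_
  have hset : (Prod.mk x ⁻¹' {p : ℝ × ℝ | c₁ * p.1 + c₂ * p.2 = 0})
      = {-(c₁ * x) / c₂} := by
    ext y
    simp only [Set.mem_preimage, Set.mem_setOf_eq, Set.mem_singleton_iff]
    constructor
    · intro h; field_simp; linarith
    · intro h; subst h; field_simp; ring
  show (gaussianReal 0 1) (Prod.mk x ⁻¹' {p : ℝ × ℝ | c₁ * p.1 + c₂ * p.2 = 0}) = 0
  rw [hset]
  exact gaussianReal_absolutelyContinuous 0 one_ne_zero (measure_singleton _)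

lemma gauss_prod_withDensity :
    (gaussianReal 0 1).prod (gaussianReal 0 1)
      = (volume : Measure (ℝ × ℝ)).withDensity
          (fun p => gaussianPDF 0 1 p.1 * gaussianPDF 0 1 p.2) := by
  refine Measure.prod_eq fun s t hs ht => ?_
  rw [withDensity_apply _ (hs.prod ht), Measure.volume_eq_prod, ← Measure.prod_restrict,
    lintegral_prod_mul (measurable_gaussianPDF 0 1).aemeasurable
      (measurable_gaussianPDF 0 1).aemeasurable,
    gaussianReal_of_var_ne_zero 0 one_ne_zero, withDensity_apply _ hs, withDensity_apply _ ht]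

lemma lintegral_linear_cov (a b c d : ℝ) (h : a * d - b * c ≠ 0) (g : ℝ × ℝ → ℝ≥0∞) :
    ∫⁻ p : ℝ × ℝ, g p
      = ∫⁻ q : ℝ × ℝ, ENNReal.ofReal |a * d - b * c|
          * g (a * q.1 + b * q.2, c * q.1 + d * q.2) := by
  set L : (ℝ × ℝ) →ₗ[ℝ] (ℝ × ℝ) :=
    Matrix.toLin (Module.Basis.finTwoProd ℝ) (Module.Basis.finTwoProd ℝ) !![a, b; c, d] with hL
  set T : (ℝ × ℝ) →L[ℝ] (ℝ × ℝ) := LinearMap.toContinuousLinearMap L with hTdef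
  have hT : ∀ q : ℝ × ℝ, T q = (a * q.1 + b * q.2, c * q.1 + d * q.2) := by
    intro q
    show L q = _
    rw [hL]
    rw [show q = (q.1, q.2) from rfl, Matrix.toLin_finTwoProd_apply]
  have hdet : T.det = a * d - b * c := by
    show LinearMap.det ((T : (ℝ × ℝ) →ₗ[ℝ] (ℝ × ℝ))) = _
    have : ((T : (ℝ × ℝ) →ₗ[ℝ] (ℝ × ℝ))) = L := by
      ext p <;> simp [hTdef]
    rw [this, hL, LinearMap.det_toLin, Matrix.det_fin_two_of]
  have hinj : Set.InjOn (⇑T) Set.univ := by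
    intro q _ q' _ hqq
    rw [hT, hT] at hqq
    have e1 : a * q.1 + b * q.2 = a * q'.1 + b * q'.2 := congrArg Prod.fst hqq
    have e2 : c * q.1 + d * q.2 = c * q'.1 + d * q'.2 := congrArg Prod.snd hqq
    have h1 : (a * d - b * c) * q.1 = (a * d - b * c) * q'.1 := by
      linear_combination d * e1 - b * e2
    have h2 : (a * d - b * c) * q.2 = (a * d - b * c) * q'.2 := by
      linear_combination a * e2 - c * e1
    exact Prod.ext (mul_left_cancel₀ h h1) (mul_left_cancel₀ h h2)
  have himg : (⇑T) '' Set.univ = Set.univ := by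
    refine Set.eq_univ_of_forall fun p => ?_
    refine ⟨((d * p.1 - b * p.2) / (a * d - b * c), (a * p.2 - c * p.1) / (a * d - b * c)),
      Set.mem_univ _, ?_⟩
    rw [hT]
    have : p = (p.1, p.2) := rfl
    rw [this]
    have hinv : (a * d - b * c) * (a * d - b * c)⁻¹ = 1 := mul_inv_cancel₀ h
    dsimp only
    congr 1
    · linear_combination p.1 * hinv
    · linear_combination p.2 * hinv
  have hfd : ∀ x ∈ Set.univ, HasFDerivWithinAt (⇑T) T Set.univ x :=
    fun x _ => (T.hasFDerivAt).hasFDerivWithinAt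
  have := lintegral_image_eq_lintegral_abs_det_fderiv_mul volume MeasurableSet.univ hfd hinj g
  rw [himg, Measure.restrict_univ] at this
  rw [this]
  refine lintegral_congr fun q => ?_
  rw [hdet, hT]

lemma final_algebra {ρ : ℝ} (hρ1 : -1 < ρ) (hρ2 : ρ < 1) (v : ℝ) :
    2 * Real.exp v * (4 * π * Real.sqrt (1 - ρ ^ 2))⁻¹ *
      ((4 * (1 + ρ))⁻¹ * Real.exp v ^ 2 + (4 * (1 - ρ))⁻¹)⁻¹
      = 2 / (π * (Real.exp (v - _root_.artanh ρ) + Real.exp (-(v - _root_.artanh ρ)))) := by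
  have h1p : (0:ℝ) < 1 + ρ := by linarith
  have h1m : (0:ℝ) < 1 - ρ := by linarith
  set A : ℝ := Real.sqrt (1 + ρ) with hAdef
  set B : ℝ := Real.sqrt (1 - ρ) with hBdef
  have hA : A ^ 2 = 1 + ρ := Real.sq_sqrt h1p.le
  have hB : B ^ 2 = 1 - ρ := Real.sq_sqrt h1m.le
  have hApos : 0 < A := Real.sqrt_pos.mpr h1p
  have hBpos : 0 < B := Real.sqrt_pos.mpr h1m
  have hsq : Real.sqrt (1 - ρ ^ 2) = A * B := by
    rw [show (1:ℝ) - ρ ^ 2 = (1 + ρ) * (1 - ρ) by ring, Real.sqrt_mul h1p.le]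
  have hc : Real.exp (_root_.artanh ρ) = A / B := by
    unfold _root_.artanh
    rw [show (1/2 : ℝ) * Real.log ((1 + ρ) / (1 - ρ))
        = Real.log (Real.sqrt ((1 + ρ) / (1 - ρ))) by rw [Real.log_sqrt (by positivity)]; ring,
      Real.exp_log (Real.sqrt_pos.mpr (by positivity)), Real.sqrt_div h1p.le]
  have hev : 0 < Real.exp v := Real.exp_pos v
  have he1 : Real.exp (v - _root_.artanh ρ) = Real.exp v * B / A := by
    rw [Real.exp_sub, hc]
    field_simp
  have he2 : Real.exp (-(v - _root_.artanh ρ)) = A / (Real.exp v * B) := by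
    rw [Real.exp_neg, he1, inv_div]
  rw [hsq, he1, he2, show (1:ℝ) + ρ = A ^ 2 from hA.symm, show (1:ℝ) - ρ = B ^ 2 from hB.symm]
  have hπ : (0:ℝ) < π := Real.pi_pos
  field_simp

lemma ofReal_shuffle (i : ℝ≥0∞) {a b : ℝ} (ha : 0 ≤ a) (hb : 0 ≤ b) :
    (2:ℝ≥0∞) * (ENNReal.ofReal a * (i * ENNReal.ofReal b))
      = i * ENNReal.ofReal (2 * a * b) := by
  rw [show (2:ℝ) * a * b = 2 * (a * b) by ring,
    ENNReal.ofReal_mul (by norm_num : (0:ℝ) ≤ 2),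
    ENNReal.ofReal_mul ha, ENNReal.ofReal_ofNat]
  ring

lemma key_law {ρ : ℝ} (hρ1 : -1 < ρ) (hρ2 : ρ < 1) :
    Measure.map (fun p : ℝ × ℝ =>
        Real.log |(1 + ρ) * p.1 + Real.sqrt (1 - ρ ^ 2) * p.2|
          - Real.log |(1 - ρ) * p.1 - Real.sqrt (1 - ρ ^ 2) * p.2|)
      ((gaussianReal 0 1).prod (gaussianReal 0 1))
      = volume.withDensity fun v : ℝ =>
          ENNReal.ofReal
            (2 / (π * (Real.exp (v - _root_.artanh ρ) + Real.exp (-(v - _root_.artanh ρ))))) := by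
  have h1p : (0:ℝ) < 1 + ρ := by linarith
  have h1m : (0:ℝ) < 1 - ρ := by linarith
  have hsqpos : 0 < Real.sqrt (1 - ρ ^ 2) := Real.sqrt_pos.mpr (by nlinarith)
  set sq : ℝ := Real.sqrt (1 - ρ ^ 2) with hsqdef
  have hsq2 : sq ^ 2 = 1 - ρ ^ 2 := Real.sq_sqrt (by nlinarith)
  have hπ : (0:ℝ) < π := Real.pi_pos
  set G : ℝ × ℝ → ℝ := fun p =>
    Real.log |(1 + ρ) * p.1 + sq * p.2| - Real.log |(1 - ρ) * p.1 - sq * p.2| with hGdef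
  have hGmeas : Measurable G := by
    apply Measurable.sub
    · exact Real.measurable_log.comp ((by fun_prop : Measurable
        (fun p : ℝ × ℝ => ((1:ℝ) + ρ) * p.1 + sq * p.2)).abs)
    · exact Real.measurable_log.comp ((by fun_prop : Measurable
        (fun p : ℝ × ℝ => ((1:ℝ) - ρ) * p.1 - sq * p.2)).abs)
  set k₁ : ℝ := (4 * (1 + ρ))⁻¹ with hk₁def
  set k₂ : ℝ := (4 * (1 - ρ))⁻¹ with hk₂def
  set c0 : ℝ := (4 * π * sq)⁻¹ with hc0def
  have hk₁pos : 0 < k₁ := by rw [hk₁def]; rw [inv_pos]; nlinarith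
  have hk₂pos : 0 < k₂ := by rw [hk₂def]; rw [inv_pos]; nlinarith
  have hc0pos : 0 < c0 := by rw [hc0def]; rw [inv_pos]; positivity
  refine Measure.ext fun E hE => ?_
  rw [Measure.map_apply hGmeas hE, gauss_prod_withDensity,
    withDensity_apply _ (hGmeas hE), withDensity_apply _ hE]
  set ind : ℝ → ℝ≥0∞ := E.indicator (fun _ => (1:ℝ≥0∞)) with hind
  have hindmeas : Measurable ind := measurable_const.indicator hE
  have hindne : ∀ v, ind v ≠ ⊤ := by
    intro v; rw [hind]; by_cases hv : v ∈ E <;> simp [hv]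
  -- Step A : clean form of the Gaussian density
  have stepA : (∫⁻ p in G ⁻¹' E,
        gaussianPDF 0 1 p.1 * gaussianPDF 0 1 p.2 ∂(volume : Measure (ℝ × ℝ)))
      = ∫⁻ p : ℝ × ℝ,
          ind (G p) * ENNReal.ofReal ((2 * π)⁻¹ * Real.exp (-(p.1 ^ 2 + p.2 ^ 2) / 2)) := by
    rw [← lintegral_indicator (hGmeas hE) _]
    refine lintegral_congr fun p => ?_
    have hpdf : gaussianPDF 0 1 p.1 * gaussianPDF 0 1 p.2
        = ENNReal.ofReal ((2 * π)⁻¹ * Real.exp (-(p.1 ^ 2 + p.2 ^ 2) / 2)) := by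
      show ENNReal.ofReal _ * ENNReal.ofReal _ = _
      rw [← ENNReal.ofReal_mul (gaussianPDFReal_nonneg _ _ _)]
      congr 1
      simp only [gaussianPDFReal, NNReal.coe_one, mul_one, sub_zero]
      have hss : (Real.sqrt (2 * π))⁻¹ * (Real.sqrt (2 * π))⁻¹ = (2 * π)⁻¹ := by
        rw [← mul_inv, Real.mul_self_sqrt (by positivity)]
      rw [show (-(p.1 ^ 2 + p.2 ^ 2) / 2 : ℝ) = -p.1 ^ 2 / 2 + -p.2 ^ 2 / 2 by ring,
        Real.exp_add, ← hss]
      ring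
    by_cases hp : p ∈ G ⁻¹' E
    · rw [Set.indicator_of_mem hp, hpdf, hind,
        Set.indicator_of_mem (Set.mem_preimage.mp hp), one_mul]
    · rw [Set.indicator_of_notMem hp, hind,
        Set.indicator_of_notMem (fun h => hp (Set.mem_preimage.mpr h)), zero_mul]
  -- Step B : linear change of variables
  have hDval : (1/2 : ℝ) * (-(1 + ρ) / (2 * sq)) - (1/2) * ((1 - ρ) / (2 * sq))
      = -(2 * sq)⁻¹ := by field_simp; ring
  have hDne0 : (1/2 : ℝ) * (-(1 + ρ) / (2 * sq)) - (1/2) * ((1 - ρ) / (2 * sq)) ≠ 0 := by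
    rw [hDval]; exact neg_ne_zero.mpr (inv_ne_zero (by positivity))
  have hcov := lintegral_linear_cov (1/2) (1/2) ((1 - ρ) / (2 * sq)) (-(1 + ρ) / (2 * sq)) hDne0
      (fun p => ind (G p) * ENNReal.ofReal ((2 * π)⁻¹ * Real.exp (-(p.1 ^ 2 + p.2 ^ 2) / 2)))
  have stepB : ∀ q : ℝ × ℝ,
      ENNReal.ofReal |(1/2 : ℝ) * (-(1 + ρ) / (2 * sq)) - (1/2) * ((1 - ρ) / (2 * sq))|
        * ((fun p : ℝ × ℝ => ind (G p)
            * ENNReal.ofReal ((2 * π)⁻¹ * Real.exp (-(p.1 ^ 2 + p.2 ^ 2) / 2)))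
          ((1/2) * q.1 + (1/2) * q.2,
            ((1 - ρ) / (2 * sq)) * q.1 + (-(1 + ρ) / (2 * sq)) * q.2))
      = ind (Real.log |q.1| - Real.log |q.2|)
          * ENNReal.ofReal (c0 * Real.exp (-(k₁ * q.1 ^ 2) - k₂ * q.2 ^ 2)) := by
    intro q
    have hsne : sq ≠ 0 := hsqpos.ne'
    have e1 : (1 + ρ) * ((1/2) * q.1 + (1/2) * q.2)
        + sq * (((1 - ρ) / (2 * sq)) * q.1 + (-(1 + ρ) / (2 * sq)) * q.2) = q.1 := by
      field_simp; ring
    have e2 : (1 - ρ) * ((1/2) * q.1 + (1/2) * q.2)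
        - sq * (((1 - ρ) / (2 * sq)) * q.1 + (-(1 + ρ) / (2 * sq)) * q.2) = q.2 := by
      field_simp; ring
    have e3 : ((1/2) * q.1 + (1/2) * q.2) ^ 2
        + (((1 - ρ) / (2 * sq)) * q.1 + (-(1 + ρ) / (2 * sq)) * q.2) ^ 2
        = q.1 ^ 2 / (2 * (1 + ρ)) + q.2 ^ 2 / (2 * (1 - ρ)) := by
      have e0 : ((1 - ρ) / (2 * sq)) * q.1 + (-(1 + ρ) / (2 * sq)) * q.2
          = ((1 - ρ) * q.1 - (1 + ρ) * q.2) / (2 * sq) := by ring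
      have hne1 : (1:ℝ) + ρ ≠ 0 := h1p.ne'
      have hne2 : (1:ℝ) - ρ ≠ 0 := h1m.ne'
      have hne3 : (1:ℝ) - ρ ^ 2 ≠ 0 := by nlinarith
      rw [e0, div_pow, show ((2:ℝ) * sq) ^ 2 = 4 * (1 - ρ ^ 2) by rw [mul_pow, hsq2]; ring]
      field_simp
      ring
    show ENNReal.ofReal _ * (ind (G _) * ENNReal.ofReal _) = _
    simp only [hGdef]
    rw [e1, e2, e3,
      show |(1/2 : ℝ) * (-(1 + ρ) / (2 * sq)) - (1/2) * ((1 - ρ) / (2 * sq))| = (2 * sq)⁻¹ by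
        rw [hDval, abs_neg, abs_of_pos (by positivity)],
      mul_left_comm, ← ENNReal.ofReal_mul (by positivity)]
    congr 2
    rw [show -(q.1 ^ 2 / (2 * (1 + ρ)) + q.2 ^ 2 / (2 * (1 - ρ))) / 2
        = -(k₁ * q.1 ^ 2) - k₂ * q.2 ^ 2 by rw [hk₁def, hk₂def]; field_simp; ring,
      hc0def, ← mul_assoc, ← mul_inv]
    congr 2
    ring
  -- Step C : reduce to iterated integral with substituted inner variable
  set J : ℝ → ℝ → ℝ≥0∞ := fun w v => ind v * ENNReal.ofReal
      (2 * (|w| * Real.exp v)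
        * (c0 * Real.exp (-(k₁ * (|w| * Real.exp v) ^ 2) - k₂ * w ^ 2))) with hJ
  have hmeas2 : Measurable (fun q : ℝ × ℝ => ind (Real.log |q.1| - Real.log |q.2|)
      * ENNReal.ofReal (c0 * Real.exp (-(k₁ * q.1 ^ 2) - k₂ * q.2 ^ 2))) := by
    apply Measurable.mul
    · exact hindmeas.comp ((Real.measurable_log.comp measurable_fst.abs).sub
        (Real.measurable_log.comp measurable_snd.abs))
    · exact ENNReal.measurable_ofReal.comp (by fun_prop)
  have stepC : (∫⁻ q : ℝ × ℝ, ind (Real.log |q.1| - Real.log |q.2|)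
      * ENNReal.ofReal (c0 * Real.exp (-(k₁ * q.1 ^ 2) - k₂ * q.2 ^ 2)))
      = ∫⁻ w : ℝ, ∫⁻ v : ℝ, J w v := by
    rw [Measure.volume_eq_prod, lintegral_prod_symm _ hmeas2.aemeasurable]
    refine lintegral_congr_ae ?_
    have h0 : ∀ᵐ w : ℝ, w ≠ (0:ℝ) := by
      rw [ae_iff]
      have hset : {a : ℝ | ¬ a ≠ 0} = {(0:ℝ)} := by ext a; simp
      rw [hset]; exact measure_singleton 0
    filter_upwards [h0] with w hw
    have habs : 0 < |w| := abs_pos.mpr hw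
    rw [lintegral_split (fun u => ind (Real.log |u| - Real.log |w|)
        * ENNReal.ofReal (c0 * Real.exp (-(k₁ * u ^ 2) - k₂ * w ^ 2))), lintegral_Iio_neg]
    have hrefl : ∀ u : ℝ, ind (Real.log |(-u)| - Real.log |w|)
        * ENNReal.ofReal (c0 * Real.exp (-(k₁ * (-u) ^ 2) - k₂ * w ^ 2))
        = ind (Real.log |u| - Real.log |w|)
          * ENNReal.ofReal (c0 * Real.exp (-(k₁ * u ^ 2) - k₂ * w ^ 2)) := by
      intro u; rw [abs_neg, neg_sq]
    rw [setLIntegral_congr_fun measurableSet_Ioi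
      (fun u _ => hrefl u), ← two_mul,
      lintegral_Ioi_eq_exp habs, ← lintegral_const_mul' 2 _ (by norm_num : (2:ℝ≥0∞) ≠ ⊤)]
    refine lintegral_congr fun v => ?_
    have habs2 : |(|w| * Real.exp v)| = |w| * Real.exp v := abs_of_pos (by positivity)
    have hlog : Real.log (|w| * Real.exp v) - Real.log |w| = v := by
      rw [Real.log_mul habs.ne' (Real.exp_ne_zero v), Real.log_exp]; ring
    rw [hJ]
    show (2:ℝ≥0∞) * (ENNReal.ofReal (|w| * Real.exp v)
        * (ind (Real.log |(|w| * Real.exp v)| - Real.log |w|) * ENNReal.ofReal _)) = _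
    rw [habs2, hlog]
    exact ofReal_shuffle (ind v) (by positivity) (by positivity)
  -- Step D : swap the two integrals
  have hJswap : Measurable (fun z : ℝ × ℝ => J z.1 z.2) := by
    apply Measurable.mul
    · exact hindmeas.comp measurable_snd
    · exact ENNReal.measurable_ofReal.comp (by fun_prop)
  have stepD : (∫⁻ w : ℝ, ∫⁻ v : ℝ, J w v) = ∫⁻ v : ℝ, ∫⁻ w : ℝ, J w v :=
    lintegral_lintegral_swap hJswap.aemeasurable
  -- Step E : the inner Gaussian-type integral
  have stepE : ∀ v : ℝ, (∫⁻ w : ℝ, J w v)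
      = ind v * ENNReal.ofReal
          (2 * Real.exp v * c0 * (k₁ * Real.exp v ^ 2 + k₂)⁻¹) := by
    intro v
    have hK : 0 < k₁ * Real.exp v ^ 2 + k₂ := by positivity
    calc (∫⁻ w : ℝ, J w v)
        = ∫⁻ w : ℝ, (ind v * ENNReal.ofReal (2 * Real.exp v * c0))
            * ENNReal.ofReal (|w| * Real.exp (-((k₁ * Real.exp v ^ 2 + k₂) * w ^ 2))) := by
          refine lintegral_congr fun w => ?_
          rw [hJ]
          show ind v * ENNReal.ofReal (2 * (|w| * Real.exp v)
              * (c0 * Real.exp (-(k₁ * (|w| * Real.exp v) ^ 2) - k₂ * w ^ 2)))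
            = (ind v * ENNReal.ofReal (2 * Real.exp v * c0))
              * ENNReal.ofReal (|w| * Real.exp (-((k₁ * Real.exp v ^ 2 + k₂) * w ^ 2)))
          rw [mul_assoc (ind v), ← ENNReal.ofReal_mul
            (by positivity : (0:ℝ) ≤ 2 * Real.exp v * c0)]
          congr 2
          rw [show -(k₁ * (|w| * Real.exp v) ^ 2) - k₂ * w ^ 2
              = -((k₁ * Real.exp v ^ 2 + k₂) * w ^ 2) by rw [mul_pow, sq_abs]; ring]
          ring
      _ = (ind v * ENNReal.ofReal (2 * Real.exp v * c0))
            * ENNReal.ofReal ((k₁ * Real.exp v ^ 2 + k₂)⁻¹) := by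
          rw [lintegral_const_mul' _ _ (ENNReal.mul_ne_top (hindne v) ENNReal.ofReal_ne_top),
            lintegral_abs_mul_exp_neg_mul_sq hK]
      _ = ind v * ENNReal.ofReal
            (2 * Real.exp v * c0 * (k₁ * Real.exp v ^ 2 + k₂)⁻¹) := by
          rw [mul_assoc, ← ENNReal.ofReal_mul (by positivity)]
  -- Assemble everything
  calc (∫⁻ p in G ⁻¹' E,
        gaussianPDF 0 1 p.1 * gaussianPDF 0 1 p.2 ∂(volume : Measure (ℝ × ℝ)))
      = ∫⁻ p : ℝ × ℝ,
          ind (G p) * ENNReal.ofReal ((2 * π)⁻¹ * Real.exp (-(p.1 ^ 2 + p.2 ^ 2) / 2)) := stepA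
    _ = ∫⁻ q : ℝ × ℝ, ind (Real.log |q.1| - Real.log |q.2|)
          * ENNReal.ofReal (c0 * Real.exp (-(k₁ * q.1 ^ 2) - k₂ * q.2 ^ 2)) := by
        rw [hcov]; exact lintegral_congr stepB
    _ = ∫⁻ w : ℝ, ∫⁻ v : ℝ, J w v := stepC
    _ = ∫⁻ v : ℝ, ∫⁻ w : ℝ, J w v := stepD
    _ = ∫⁻ v : ℝ, ind v * ENNReal.ofReal
          (2 * Real.exp v * c0 * (k₁ * Real.exp v ^ 2 + k₂)⁻¹) := lintegral_congr stepE
    _ = ∫⁻ v : ℝ, E.indicator (fun v => ENNReal.ofReal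
          (2 / (π * (Real.exp (v - _root_.artanh ρ) + Real.exp (-(v - _root_.artanh ρ)))))) v := by
        refine lintegral_congr fun v => ?_
        rw [hind]
        by_cases hv : v ∈ E
        · rw [Set.indicator_of_mem hv, Set.indicator_of_mem hv, one_mul]
          congr 1
          rw [hc0def, hk₁def, hk₂def]
          exact final_algebra hρ1 hρ2 v
        · rw [Set.indicator_of_notMem hv, Set.indicator_of_notMem hv, zero_mul]
    _ = ∫⁻ v in E, ENNReal.ofReal
          (2 / (π * (Real.exp (v - _root_.artanh ρ) + Real.exp (-(v - _root_.artanh ρ))))) :=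
        lintegral_indicator hE _

end AuxLemmas

/-- Distribution of the z-transformed intraclass correlation coefficient for one
bivariate normal pair: if `X₁ = μ + σZ₁`, `X₂ = μ + σ(ρZ₁ + √(1−ρ²)Z₂)` with `Z₁, Z₂`
independent standard normals, and `R = 2(X₁−μ)(X₂−μ)/((X₁−μ)² + (X₂−μ)²)`, then
`V = artanh R` has density `v ↦ (1/π) sech(v − artanh ρ)`. -/
theorem arctanh_intraclass_correlation_law
    {Ω : Type*} [MeasureSpace Ω] [IsProbabilityMeasure (ℙ : Measure Ω)]
    (Z₁ Z₂ : Ω → ℝ) (hZ₁ : Measurable Z₁) (hZ₂ : Measurable Z₂)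
    (hindep : IndepFun Z₁ Z₂ ℙ)
    (hZ₁law : Measure.map Z₁ ℙ = gaussianReal 0 1)
    (hZ₂law : Measure.map Z₂ ℙ = gaussianReal 0 1)
    (μ σ ρ : ℝ) (hσ : 0 < σ) (hρ : ρ ∈ Set.Ioo (-1 : ℝ) 1)
    (X₁ X₂ : Ω → ℝ)
    (hX₁ : X₁ = fun ω => μ + σ * Z₁ ω)
    (hX₂ : X₂ = fun ω => μ + σ * (ρ * Z₁ ω + Real.sqrt (1 - ρ ^ 2) * Z₂ ω))
    (R V : Ω → ℝ)
    (hR : R = fun ω =>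
      2 * (X₁ ω - μ) * (X₂ ω - μ) / ((X₁ ω - μ) ^ 2 + (X₂ ω - μ) ^ 2))
    (hV : V = fun ω => _root_.artanh (R ω)) :
    Measure.map V ℙ = volume.withDensity fun v : ℝ =>
      ENNReal.ofReal
        (2 / (π * (Real.exp (v - _root_.artanh ρ) + Real.exp (-(v - _root_.artanh ρ))))) := by
  obtain ⟨hρ1, hρ2⟩ := hρ
  have h1p : (0:ℝ) < 1 + ρ := by linarith
  have h1m : (0:ℝ) < 1 - ρ := by linarith
  have hsqpos : 0 < Real.sqrt (1 - ρ ^ 2) := Real.sqrt_pos.mpr (by nlinarith)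
  set sq : ℝ := Real.sqrt (1 - ρ ^ 2) with hsqdef
  have hsq2 : sq ^ 2 = 1 - ρ ^ 2 := Real.sq_sqrt (by nlinarith)
  -- the function F on ℝ²
  set F : ℝ × ℝ → ℝ := fun p =>
    _root_.artanh (2 * p.1 * (ρ * p.1 + sq * p.2) / (p.1 ^ 2 + (ρ * p.1 + sq * p.2) ^ 2)) with hF
  have hartanh_meas : Measurable _root_.artanh := by
    unfold _root_.artanh
    exact (Real.measurable_log.comp
      ((measurable_const.add measurable_id).div (measurable_const.sub measurable_id))).const_mul _
  have hFmeas : Measurable F := by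
    apply hartanh_meas.comp
    fun_prop
  have hVF : V = fun ω => F (Z₁ ω, Z₂ ω) := by
    funext ω
    rw [hV, hR, hX₁, hX₂]
    simp only [hF]
    congr 1
    have hσ2 : σ ^ 2 ≠ 0 := pow_ne_zero _ hσ.ne'
    have e1 : 2 * (μ + σ * Z₁ ω - μ) * (μ + σ * (ρ * Z₁ ω + sq * Z₂ ω) - μ)
        = σ ^ 2 * (2 * Z₁ ω * (ρ * Z₁ ω + sq * Z₂ ω)) := by ring
    have e2 : (μ + σ * Z₁ ω - μ) ^ 2 + (μ + σ * (ρ * Z₁ ω + sq * Z₂ ω) - μ) ^ 2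
        = σ ^ 2 * (Z₁ ω ^ 2 + (ρ * Z₁ ω + sq * Z₂ ω) ^ 2) := by ring
    rw [e1, e2, mul_div_mul_left _ _ hσ2]
  -- law of the pair
  have hpair : Measure.map (fun ω => (Z₁ ω, Z₂ ω)) ℙ
      = (gaussianReal 0 1).prod (gaussianReal 0 1) := by
    exact ((indepFun_iff_map_prod_eq_prod_map_map hZ₁.aemeasurable hZ₂.aemeasurable).mp
      hindep).trans (by rw [hZ₁law, hZ₂law])
  have hmapV : Measure.map V ℙ
      = Measure.map F ((gaussianReal 0 1).prod (gaussianReal 0 1)) := by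
    rw [hVF, ← hpair, Measure.map_map hFmeas (hZ₁.prodMk hZ₂)]
    rfl
  -- replace F by G a.e.
  set G : ℝ × ℝ → ℝ := fun p =>
    Real.log |(1 + ρ) * p.1 + sq * p.2| - Real.log |(1 - ρ) * p.1 - sq * p.2| with hG
  have hFG : Measure.map F ((gaussianReal 0 1).prod (gaussianReal 0 1))
      = Measure.map G ((gaussianReal 0 1).prod (gaussianReal 0 1)) := by
    apply Measure.map_congr
    rw [Filter.eventuallyEq_iff_exists_mem]
    refine ⟨{p : ℝ × ℝ | (1 + ρ) * p.1 + sq * p.2 = 0}ᶜ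
      ∩ {p : ℝ × ℝ | (1 - ρ) * p.1 + (-sq) * p.2 = 0}ᶜ, ?_, ?_⟩
    · rw [Filter.inter_mem_iff]
      constructor
      · rw [mem_ae_iff, compl_compl]
        exact gauss_line _ _ hsqpos.ne'
      · rw [mem_ae_iff, compl_compl]
        exact gauss_line _ _ (neg_ne_zero.mpr hsqpos.ne')
    · rintro p ⟨hp1, hp2⟩
      simp only [Set.mem_compl_iff, Set.mem_setOf_eq] at hp1 hp2
      have h1 : p.1 + (ρ * p.1 + sq * p.2) ≠ 0 := by
        intro h; exact hp1 (by linarith [h])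
      have h2 : p.1 - (ρ * p.1 + sq * p.2) ≠ 0 := by
        intro h; apply hp2; linarith [h]
      show F p = G p
      simp only [hF, hG]
      rw [artanh_ratio h1 h2]
      congr 2 <;> ring
  rw [hmapV, hFG]
  have := key_law hρ1 hρ2
  rw [← hsqdef] at this
  convert this using 2
end

section
/- The log of the absolute value of a scaled standard Cauchy variable is a shifted hyperbolic-secant variable: for any η > 0, the pushforward of the measure on ℝ with Lebesgue density x ↦ (1/π)·η/(η² + x²) (the Cauchy distribution with location 0 and scale η) under the map x ↦ log|x| equals the measure on ℝ with Lebesgue density v ↦ (1/π)·sech(v − log η) = 2/(π(e^{v − log η} + e^{-(v − log η)})). -/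
open Real MeasureTheory Set
open scoped ENNReal

lemma lintegral_image_eq_lintegral_abs_deriv_mul' {s : Set ℝ} {f f' : ℝ → ℝ}
    (hs : MeasurableSet s) (hf' : ∀ x ∈ s, HasDerivWithinAt f (f' x) s x)
    (hf : InjOn f s) (g : ℝ → ℝ≥0∞) :
    ∫⁻ x in Set.image f s, g x = ∫⁻ x in s, ENNReal.ofReal |f' x| * g (f x) := by
  simpa only [ContinuousLinearMap.det_toSpanSingleton] using
    MeasureTheory.lintegral_image_eq_lintegral_abs_det_fderiv_mul volume hs
      (fun x hx => (hf' x hx).hasFDerivWithinAt) hf g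

/-- If `C` is Cauchy with location `0` and scale `η`, then `log |C|` has the
hyperbolic-secant density shifted by `log η`. -/
theorem cauchy_scale_log_abs (η : ℝ) (hη : 0 < η) :
    Measure.map (fun x : ℝ => Real.log |x|)
        (volume.withDensity fun x : ℝ => ENNReal.ofReal ((1 / π) * (η / (η ^ 2 + x ^ 2))))
      = volume.withDensity fun v : ℝ =>
          ENNReal.ofReal
            (2 / (π * (Real.exp (v - Real.log η) + Real.exp (-(v - Real.log η))))) := by
  have hπ : (0:ℝ) < π := Real.pi_pos
  set f : ℝ → ℝ≥0∞ := fun x => ENNReal.ofReal ((1 / π) * (η / (η ^ 2 + x ^ 2))) with hf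
  have hmeas : Measurable fun x : ℝ => Real.log |x| :=
    Real.measurable_log.comp measurable_abs
  refine Measure.ext fun s hs => ?_
  rw [Measure.map_apply hmeas hs, withDensity_apply _ (hmeas hs), withDensity_apply _ hs]
  set A : Set ℝ := (fun x : ℝ => Real.log |x|) ⁻¹' s with hA
  have hAm : MeasurableSet A := hmeas hs
  have e1 : ∫⁻ x in A ∩ Iic 0, f x = ∫⁻ x in A ∩ Iio 0, f x := by
    rw [← Measure.restrict_restrict hAm, ← Measure.restrict_restrict hAm,
      ← MeasureTheory.restrict_Iio_eq_restrict_Iic]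
  have hsplit : ∫⁻ x in A, f x = (∫⁻ x in A ∩ Iio 0, f x) + ∫⁻ x in A ∩ Ioi 0, f x := by
    rw [← lintegral_inter_add_diff f A measurableSet_Ioi, Set.diff_eq, Set.compl_Ioi, e1,
      add_comm]
  -- images
  have hpos : A ∩ Ioi 0 = Set.image Real.exp s := by
    ext x
    simp only [Set.mem_inter_iff, Set.mem_Ioi, Set.mem_image, hA, Set.mem_preimage]
    constructor
    · rintro ⟨hx, hx0⟩
      refine ⟨Real.log |x|, hx, ?_⟩
      rw [abs_of_pos hx0, Real.exp_log hx0]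
    · rintro ⟨v, hv, rfl⟩
      refine ⟨?_, Real.exp_pos v⟩
      rw [abs_of_pos (Real.exp_pos v), Real.log_exp]
      exact hv
  have hneg : A ∩ Iio 0 = Set.image (fun v => -Real.exp v) s := by
    ext x
    simp only [Set.mem_inter_iff, Set.mem_Iio, Set.mem_image, hA, Set.mem_preimage]
    constructor
    · rintro ⟨hx, hx0⟩
      refine ⟨Real.log |x|, hx, ?_⟩
      rw [abs_of_neg hx0, Real.exp_log (by linarith : (0:ℝ) < -x)]
      ring
    · rintro ⟨v, hv, rfl⟩
      constructor
      · rw [abs_neg, abs_of_pos (Real.exp_pos v), Real.log_exp]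
        exact hv
      · simpa using Real.exp_pos v
  have hderiv : ∀ v ∈ s, HasDerivWithinAt Real.exp (Real.exp v) s v :=
    fun v _ => (Real.hasDerivAt_exp v).hasDerivWithinAt
  have hderivneg : ∀ v ∈ s, HasDerivWithinAt (fun v => -Real.exp v) (-Real.exp v) s v :=
    fun v _ => ((Real.hasDerivAt_exp v).neg).hasDerivWithinAt
  have hinj : InjOn Real.exp s := Real.exp_injective.injOn
  have hinjneg : InjOn (fun v => -Real.exp v) s :=
    (neg_injective.comp Real.exp_injective).injOn
  have hg1 : Measurable fun v : ℝ => ENNReal.ofReal |(-Real.exp v)| * f (-Real.exp v) := by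
    refine Measurable.mul (f := fun v : ℝ => ENNReal.ofReal |(-Real.exp v)|)
      (g := fun v : ℝ => f (-Real.exp v)) ?_ ?_
    · exact measurable_exp.neg.abs.ennreal_ofReal
    · exact (measurable_const.mul
        (measurable_const.div ((measurable_const.add
          ((measurable_exp.neg).pow_const 2))))).ennreal_ofReal
  rw [hsplit, hpos, hneg,
    lintegral_image_eq_lintegral_abs_deriv_mul' hs hderiv hinj f,
    lintegral_image_eq_lintegral_abs_deriv_mul' hs hderivneg hinjneg f,
    ← lintegral_add_left hg1]
  apply setLIntegral_congr_fun hs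
  intro v _
  beta_reduce
  have he : (0:ℝ) < Real.exp v := Real.exp_pos v
  rw [abs_neg, abs_of_pos he]
  simp only [hf]
  rw [neg_sq]
  rw [← ENNReal.ofReal_mul he.le, ← ENNReal.ofReal_add (by positivity) (by positivity)]
  congr 1
  rw [neg_sub, Real.exp_sub, Real.exp_sub, Real.exp_log hη]
  have h1 : η ^ 2 + Real.exp v ^ 2 ≠ 0 := by positivity
  have h2 : π ≠ 0 := ne_of_gt hπ
  have h3 : Real.exp v ≠ 0 := ne_of_gt he
  have h4 : η ≠ 0 := ne_of_gt hη
  field_simp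
  ring
end
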